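/- Let K ⊂ ℝⁿ be a generalized Orlicz ball, i.e. K = {x ∈ ℝⁿ : Σᵢ fᵢ(|xᵢ|) ≤ 1} where each fᵢ : [0,∞) → [0,∞) is convex, increasing, with fᵢ(0) = 0. Let m(y,z) be the (n−2)-dimensional measure of the section of K at x₁ = y, x₂ = z. Then for all y > ȳ > 0 and z > z̄ > 0: m(y,z̄)·m(ȳ,z) ≥ m(y,z)·m(ȳ,z̄). -/

import Mathlib

open MeasureTheory Set ENNReal

lemma amgm2 {l : ℝ} (hl0 : 0 < l) (hl1 : l < 1) (x y : ℝ≥0∞) :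
    x ^ l * y ^ (1 - l) ≤ ENNReal.ofReal l * x + ENNReal.ofReal (1 - l) * y := by
  rcases eq_or_ne x ∞ with rfl | hx
  · have : ENNReal.ofReal l * ∞ = ∞ := by
      rw [ENNReal.mul_top]
      simpa using hl0
    rw [this]
    simp
  rcases eq_or_ne y ∞ with rfl | hy
  · have : ENNReal.ofReal (1 - l) * ∞ = ∞ := by
      rw [ENNReal.mul_top]
      simp only [ne_eq, ENNReal.ofReal_eq_zero, not_le]
      linarith
    rw [this]
    simp
  lift x to NNReal using hx
  lift y to NNReal using hy
  rw [← ENNReal.coe_rpow_of_nonneg x hl0.le, ← ENNReal.coe_rpow_of_nonneg y (by linarith),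
    ENNReal.ofReal, ENNReal.ofReal, ← ENNReal.coe_mul, ← ENNReal.coe_mul, ← ENNReal.coe_mul,
    ← ENNReal.coe_add, ENNReal.coe_le_coe]
  have h1l : (0:ℝ) ≤ 1 - l := by linarith
  have hw : l.toNNReal + (1 - l).toNNReal = 1 := by
    rw [← Real.toNNReal_add hl0.le h1l]
    norm_num
  have h := NNReal.geom_mean_le_arith_mean2_weighted l.toNNReal (1 - l).toNNReal x y hw
  rwa [Real.coe_toNNReal _ hl0.le, Real.coe_toNNReal _ h1l] at h

lemma bm_one_dim {A B C : Set ℝ} (hA : MeasurableSet A) (hB : MeasurableSet B)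
    (hAne : A.Nonempty) (hBne : B.Nonempty)
    (hC : ∀ a ∈ A, ∀ b ∈ B, a + b ∈ C) :
    volume A + volume B ≤ volume C := by
  -- compact case
  have key : ∀ K L : Set ℝ, IsCompact K → IsCompact L → K.Nonempty → L.Nonempty →
      K ⊆ A → L ⊆ B → volume K + volume L ≤ volume C := by
    intro K L hK hL hKne hLne hKA hLB
    set U : Set ℝ := (fun x => x + (-sSup L)) ⁻¹' K with hUdef
    set V : Set ℝ := (fun x => x + (-sInf K)) ⁻¹' L with hVdef
    have hsSup : sSup L ∈ L := hL.sSup_mem hLne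
    have hsInf : sInf K ∈ K := hK.sInf_mem hKne
    have hUC : U ⊆ C := by
      intro x hx
      have : x = (x + (-sSup L)) + sSup L := by ring
      rw [this]
      exact hC _ (hKA hx) _ (hLB hsSup)
    have hVC : V ⊆ C := by
      intro x hx
      have : x = sInf K + (x + (-sInf K)) := by ring
      rw [this]
      exact hC _ (hKA hsInf) _ (hLB hx)
    have hUV : U ∩ V ⊆ {sInf K + sSup L} := by
      rintro x ⟨hxU, hxV⟩
      have h1 : sInf K ≤ x + (-sSup L) := csInf_le hK.bddBelow hxU
      have h2 : x + (-sInf K) ≤ sSup L := le_csSup hL.bddAbove hxV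
      have : x = sInf K + sSup L := by linarith
      simp [this]
    have hUvol : volume U = volume K := measure_preimage_add_right volume _ K
    have hVvol : volume V = volume L := measure_preimage_add_right volume _ L
    have hVmeas : MeasurableSet V := (measurable_add_const _) hL.measurableSet
    calc volume K + volume L = volume U + volume V := by rw [hUvol, hVvol]
      _ = volume (U ∪ V) + volume (U ∩ V) := (measure_union_add_inter U hVmeas).symm
      _ ≤ volume C + 0 := by
          refine add_le_add (measure_mono (union_subset hUC hVC)) ?_
          calc volume (U ∩ V) ≤ volume {sInf K + sSup L} := measure_mono hUV
            _ = 0 := Real.volume_singleton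
      _ = volume C := add_zero _
  rcases hAne with ⟨a₀, ha₀⟩
  rcases hBne with ⟨b₀, hb₀⟩
  rcases eq_or_ne (volume A) ∞ with hAinf | hAfin
  · have hsub : (fun x => x + (-b₀)) ⁻¹' A ⊆ C := by
      intro x hx
      have : x = (x + (-b₀)) + b₀ := by ring
      rw [this]; exact hC _ hx _ hb₀
    have : volume C = ∞ := by
      refine top_le_iff.mp ?_
      calc (⊤ : ℝ≥0∞) = volume A := hAinf.symm
        _ = volume ((fun x => x + (-b₀)) ⁻¹' A) := (measure_preimage_add_right volume _ A).symm
        _ ≤ volume C := measure_mono hsub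
    simp [this]
  rcases eq_or_ne (volume B) ∞ with hBinf | hBfin
  · have hsub : (fun x => x + (-a₀)) ⁻¹' B ⊆ C := by
      intro x hx
      have : x = a₀ + (x + (-a₀)) := by ring
      rw [this]; exact hC _ ha₀ _ hx
    have : volume C = ∞ := by
      refine top_le_iff.mp ?_
      calc (⊤ : ℝ≥0∞) = volume B := hBinf.symm
        _ = volume ((fun x => x + (-a₀)) ⁻¹' B) := (measure_preimage_add_right volume _ B).symm
        _ ≤ volume C := measure_mono hsub
    simp [this]
  refine ENNReal.le_of_forall_pos_le_add fun ε hε _ => ?_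
  have hε2 : ((ε : ℝ≥0∞) / 2) ≠ 0 := by
    simp [ENNReal.div_eq_zero_iff, hε.ne']
  obtain ⟨K, hKA, hK, hKvol⟩ := hA.exists_isCompact_lt_add hAfin hε2
  obtain ⟨L, hLB, hL, hLvol⟩ := hB.exists_isCompact_lt_add hBfin hε2
  have hK' : IsCompact (insert a₀ K) := hK.insert a₀
  have hL' : IsCompact (insert b₀ L) := hL.insert b₀
  have h1 := key (insert a₀ K) (insert b₀ L) hK' hL' ⟨a₀, mem_insert _ _⟩ ⟨b₀, mem_insert _ _⟩
      (insert_subset ha₀ hKA) (insert_subset hb₀ hLB)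
  calc volume A + volume B
      ≤ (volume (insert a₀ K) + ε / 2) + (volume (insert b₀ L) + ε / 2) := by
        refine add_le_add ?_ ?_
        · exact le_trans hKvol.le (add_le_add_left (measure_mono (subset_insert _ _)) _)
        · exact le_trans hLvol.le (add_le_add_left (measure_mono (subset_insert _ _)) _)
    _ = (volume (insert a₀ K) + volume (insert b₀ L)) + (ε / 2 + ε / 2) := by ring
    _ ≤ volume C + ε := by
        rw [ENNReal.add_halves]
        exact add_le_add_left h1 _

/-- Layer-cake for a measurable `ℝ≥0∞`-valued function bounded by 1. -/
lemma layercake_le_one {f : ℝ → ℝ≥0∞} (hf : Measurable f) (hf1 : ∀ x, f x ≤ 1) :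
    ∫⁻ x, f x = ∫⁻ t in Ioo (0:ℝ) 1, volume {x | ENNReal.ofReal t < f x} := by
  have hfin : ∀ x, f x ≠ ∞ := fun x => (lt_of_le_of_lt (hf1 x) one_lt_top).ne
  have h1 : ∫⁻ x, f x = ∫⁻ x, ENNReal.ofReal ((f x).toReal) := by
    refine lintegral_congr fun x => ?_
    rw [ENNReal.ofReal_toReal (hfin x)]
  have hmble : Measurable fun x => (f x).toReal := hf.ennreal_toReal
  rw [h1, lintegral_eq_lintegral_meas_lt volume (Filter.Eventually.of_forall fun x => ENNReal.toReal_nonneg)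
    hmble.aemeasurable]
  have hsets : ∀ t ∈ Ioi (0:ℝ), volume {x | t < (f x).toReal} = volume {x | ENNReal.ofReal t < f x} := by
    intro t ht
    congr 1
    ext x
    simp only [mem_setOf_eq]
    exact (ENNReal.ofReal_lt_iff_lt_toReal (le_of_lt ht) (hfin x)).symm
  rw [setLIntegral_congr_fun measurableSet_Ioi hsets]
  have hsplit : Ioo (0:ℝ) 1 ∪ Ici 1 = Ioi 0 := Ioo_union_Ici_eq_Ioi zero_lt_one
  rw [← hsplit, lintegral_union measurableSet_Ici]
  · have hz : ∀ t ∈ Ici (1:ℝ), volume {x | ENNReal.ofReal t < f x} = 0 := by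
      intro t ht
      have : {x | ENNReal.ofReal t < f x} = ∅ := by
        ext x
        simp only [mem_setOf_eq, mem_empty_iff_false, iff_false, not_lt]
        exact le_trans (hf1 x) (ENNReal.one_le_ofReal.mpr ht)
      rw [this]; simp
    rw [setLIntegral_congr_fun measurableSet_Ici hz]
    simp
  · exact disjoint_left.mpr fun t ht ht' => absurd ht.2 (not_lt.mpr ht')

lemma prekopa_leindler_dim1 {f g h : ℝ → ℝ≥0∞} (hf : Measurable f) (hg : Measurable g)
    (hh : Measurable h) {l : ℝ} (hl0 : 0 < l) (hl1 : l < 1)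
    (hfS : (⨆ x, f x) ≠ ∞) (hgS : (⨆ x, g x) ≠ ∞)
    (key : ∀ x y, f x ^ l * g y ^ (1 - l) ≤ h (l * x + (1 - l) * y)) :
    (∫⁻ x, f x) ^ l * (∫⁻ x, g x) ^ (1 - l) ≤ ∫⁻ x, h x := by
  have h1l : (0:ℝ) < 1 - l := by linarith
  set Sf := ⨆ x, f x with hSfdef
  set Sg := ⨆ x, g x with hSgdef
  rcases eq_or_ne Sf 0 with hSf0 | hSf0
  · have : ∀ x, f x = 0 := fun x => le_antisymm (hSf0 ▸ le_iSup f x) zero_le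
    have hint : ∫⁻ x, f x = 0 := by simp [this]
    rw [hint, ENNReal.zero_rpow_of_pos hl0, zero_mul]
    exact zero_le
  rcases eq_or_ne Sg 0 with hSg0 | hSg0
  · have : ∀ x, g x = 0 := fun x => le_antisymm (hSg0 ▸ le_iSup g x) zero_le
    have hint : ∫⁻ x, g x = 0 := by simp [this]
    rw [hint, ENNReal.zero_rpow_of_pos h1l, mul_zero]
    exact zero_le
  set D := Sf ^ l * Sg ^ (1 - l) with hDdef
  have hD0 : D ≠ 0 := by
    refine mul_ne_zero ?_ ?_
    · exact (ENNReal.rpow_pos (pos_iff_ne_zero.mpr hSf0) hfS).ne'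
    · exact (ENNReal.rpow_pos (pos_iff_ne_zero.mpr hSg0) hgS).ne' 
  have hDtop : D ≠ ∞ := by
    apply ENNReal.mul_ne_top
    · exact ENNReal.rpow_ne_top_of_nonneg hl0.le hfS
    · exact ENNReal.rpow_ne_top_of_nonneg h1l.le hgS
  set f' : ℝ → ℝ≥0∞ := fun x => f x / Sf with hf'def
  set g' : ℝ → ℝ≥0∞ := fun x => g x / Sg with hg'def
  set h' : ℝ → ℝ≥0∞ := fun x => h x / D with hh'def
  have hf' : Measurable f' := hf.div_const _
  have hg' : Measurable g' := hg.div_const _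
  have hh' : Measurable h' := hh.div_const _
  have hSf'1 : (⨆ x, f' x) = 1 := by
    rw [hf'def, ← ENNReal.iSup_div, ENNReal.div_self hSf0 hfS]
  have hSg'1 : (⨆ x, g' x) = 1 := by
    rw [hg'def, ← ENNReal.iSup_div, ENNReal.div_self hSg0 hgS]
  have hf'le1 : ∀ x, f' x ≤ 1 := fun x => hSf'1 ▸ le_iSup f' x
  have hg'le1 : ∀ x, g' x ≤ 1 := fun x => hSg'1 ▸ le_iSup g' x
  -- normalized key inequality
  have normkey : ∀ x y, f' x ^ l * g' y ^ (1 - l) ≤ h' (l * x + (1 - l) * y) := by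
    intro x y
    rw [hh'def]
    rw [ENNReal.le_div_iff_mul_le (Or.inl hD0) (Or.inl hDtop)]
    calc f' x ^ l * g' y ^ (1 - l) * D
        = (f' x ^ l * Sf ^ l) * (g' y ^ (1 - l) * Sg ^ (1 - l)) := by rw [hDdef]; ring
      _ = (f' x * Sf) ^ l * (g' y * Sg) ^ (1 - l) := by
          rw [ENNReal.mul_rpow_of_nonneg _ _ hl0.le, ENNReal.mul_rpow_of_nonneg _ _ h1l.le]
      _ = f x ^ l * g y ^ (1 - l) := by
          rw [hf'def, hg'def, ENNReal.div_mul_cancel hSf0 hfS, ENNReal.div_mul_cancel hSg0 hgS]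
      _ ≤ h (l * x + (1 - l) * y) := key x y
  -- the main pointwise measure inequality
  have claim : ∀ t ∈ Ioo (0:ℝ) 1,
      ENNReal.ofReal l * volume {x | ENNReal.ofReal t < f' x}
        + ENNReal.ofReal (1 - l) * volume {x | ENNReal.ofReal t < g' x}
      ≤ volume {x | ENNReal.ofReal t < h' x} := by
    intro t ht
    have htne0 : ENNReal.ofReal t ≠ 0 := by simp [ht.1]
    set A := {x | ENNReal.ofReal t < f' x} with hAdef
    set B := {x | ENNReal.ofReal t < g' x} with hBdef
    have hAm : MeasurableSet A := measurableSet_lt measurable_const hf'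
    have hBm : MeasurableSet B := measurableSet_lt measurable_const hg'
    have hAne : A.Nonempty := by
      have : ENNReal.ofReal t < ⨆ x, f' x := by
        rw [hSf'1]; exact ENNReal.ofReal_lt_one.mpr ht.2
      obtain ⟨x, hx⟩ := lt_iSup_iff.mp this
      exact ⟨x, hx⟩
    have hBne : B.Nonempty := by
      have : ENNReal.ofReal t < ⨆ x, g' x := by
        rw [hSg'1]; exact ENNReal.ofReal_lt_one.mpr ht.2
      obtain ⟨x, hx⟩ := lt_iSup_iff.mp this
      exact ⟨x, hx⟩
    set A2 := (fun x : ℝ => l⁻¹ • x) ⁻¹' A with hA2def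
    set B2 := (fun x : ℝ => (1 - l)⁻¹ • x) ⁻¹' B with hB2def
    have hA2m : MeasurableSet A2 := (measurable_const_smul _) hAm
    have hB2m : MeasurableSet B2 := (measurable_const_smul _) hBm
    have hA2ne : A2.Nonempty := by
      obtain ⟨x, hx⟩ := hAne
      refine ⟨l * x, ?_⟩
      simp only [hA2def, mem_preimage, smul_eq_mul]
      rw [inv_mul_cancel_left₀ hl0.ne']
      exact hx
    have hB2ne : B2.Nonempty := by
      obtain ⟨x, hx⟩ := hBne
      refine ⟨(1 - l) * x, ?_⟩
      simp only [hB2def, mem_preimage, smul_eq_mul]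
      rw [inv_mul_cancel_left₀ h1l.ne']
      exact hx
    have hA2vol : volume A2 = ENNReal.ofReal l * volume A := by
      rw [hA2def, MeasureTheory.Measure.addHaar_preimage_smul volume (inv_ne_zero hl0.ne') A]
      congr 2
      rw [Module.finrank_self, pow_one, inv_inv, abs_of_pos hl0]
    have hB2vol : volume B2 = ENNReal.ofReal (1 - l) * volume B := by
      rw [hB2def, MeasureTheory.Measure.addHaar_preimage_smul volume (inv_ne_zero h1l.ne') B]
      congr 2
      rw [Module.finrank_self, pow_one, inv_inv, abs_of_pos h1l]
    have hsum : ∀ a ∈ A2, ∀ b ∈ B2, a + b ∈ {x | ENNReal.ofReal t < h' x} := by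
      intro a ha b hb
      have haA : ENNReal.ofReal t < f' (l⁻¹ * a) := ha
      have hbB : ENNReal.ofReal t < g' ((1 - l)⁻¹ * b) := hb
      have harg : a + b = l * (l⁻¹ * a) + (1 - l) * ((1 - l)⁻¹ * b) := by
        field_simp
      simp only [mem_setOf_eq]
      rw [harg]
      refine lt_of_lt_of_le ?_ (normkey _ _)
      have e1 : ENNReal.ofReal t = ENNReal.ofReal t ^ l * ENNReal.ofReal t ^ (1 - l) := by
        rw [← ENNReal.rpow_add _ _ htne0 ENNReal.ofReal_ne_top]
        norm_num
      rw [e1]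
      calc ENNReal.ofReal t ^ l * ENNReal.ofReal t ^ (1 - l)
          < f' (l⁻¹ * a) ^ l * ENNReal.ofReal t ^ (1 - l) := by
            refine ENNReal.mul_lt_mul_left ?_ ?_ ?_
            · exact (ENNReal.rpow_pos (pos_iff_ne_zero.mpr htne0) ENNReal.ofReal_ne_top).ne'
            · exact ENNReal.rpow_ne_top_of_nonneg h1l.le ENNReal.ofReal_ne_top
            · exact ENNReal.rpow_lt_rpow haA hl0
        _ ≤ f' (l⁻¹ * a) ^ l * g' ((1 - l)⁻¹ * b) ^ (1 - l) := by
            exact mul_le_mul_right (ENNReal.rpow_le_rpow hbB.le h1l.le) _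
    have := bm_one_dim hA2m hB2m hA2ne hB2ne hsum
    calc ENNReal.ofReal l * volume A + ENNReal.ofReal (1 - l) * volume B
        = volume A2 + volume B2 := by rw [hA2vol, hB2vol]
      _ ≤ _ := this
  -- integrals of normalized functions
  have hSfinv : (Sf⁻¹ : ℝ≥0∞) ≠ ∞ := ENNReal.inv_ne_top.mpr hSf0
  have hSginv : (Sg⁻¹ : ℝ≥0∞) ≠ ∞ := ENNReal.inv_ne_top.mpr hSg0
  have hDinv : (D⁻¹ : ℝ≥0∞) ≠ ∞ := ENNReal.inv_ne_top.mpr hD0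
  have If' : ∫⁻ x, f' x = (∫⁻ x, f x) / Sf := by
    simp only [hf'def, div_eq_mul_inv]
    exact lintegral_mul_const' Sf⁻¹ f hSfinv
  have Ig' : ∫⁻ x, g' x = (∫⁻ x, g x) / Sg := by
    simp only [hg'def, div_eq_mul_inv]
    exact lintegral_mul_const' Sg⁻¹ g hSginv
  have Ih' : ∫⁻ x, h' x = (∫⁻ x, h x) / D := by
    simp only [hh'def, div_eq_mul_inv]
    exact lintegral_mul_const' D⁻¹ h hDinv
  have hlcf : ∫⁻ x, f' x = ∫⁻ t in Ioo (0:ℝ) 1, volume {x | ENNReal.ofReal t < f' x} :=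
    layercake_le_one hf' hf'le1
  have hlcg : ∫⁻ x, g' x = ∫⁻ t in Ioo (0:ℝ) 1, volume {x | ENNReal.ofReal t < g' x} :=
    layercake_le_one hg' hg'le1
  have meas_vf : Measurable fun t : ℝ => volume {x | ENNReal.ofReal t < f' x} := by
    have : Antitone fun t : ℝ => volume {x | ENNReal.ofReal t < f' x} := fun t s hts =>
      measure_mono fun x hx => lt_of_le_of_lt (ENNReal.ofReal_le_ofReal hts) hx
    exact this.measurable
  have meas_vg : Measurable fun t : ℝ => volume {x | ENNReal.ofReal t < g' x} := by
    have : Antitone fun t : ℝ => volume {x | ENNReal.ofReal t < g' x} := fun t s hts =>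
      measure_mono fun x hx => lt_of_le_of_lt (ENNReal.ofReal_le_ofReal hts) hx
    exact this.measurable
  have step1 : ∫⁻ t in Ioo (0:ℝ) 1, volume {x | ENNReal.ofReal t < h' x} ≤ ∫⁻ x, h' x := by
    have hlc : ∫⁻ x, min (h' x) 1
        = ∫⁻ t in Ioo (0:ℝ) 1, volume {x | ENNReal.ofReal t < min (h' x) 1} :=
      layercake_le_one (hh'.min measurable_const) fun x => min_le_right _ _
    have hsets : ∀ t ∈ Ioo (0:ℝ) 1,
        volume {x | ENNReal.ofReal t < h' x} = volume {x | ENNReal.ofReal t < min (h' x) 1} := by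
      intro t ht
      congr 1
      ext x
      simp only [mem_setOf_eq, lt_min_iff, iff_self_and]
      intro _
      exact ENNReal.ofReal_lt_one.mpr ht.2
    calc ∫⁻ t in Ioo (0:ℝ) 1, volume {x | ENNReal.ofReal t < h' x}
        = ∫⁻ x, min (h' x) 1 := by
          rw [setLIntegral_congr_fun measurableSet_Ioo hsets, ← hlc]
      _ ≤ ∫⁻ x, h' x := lintegral_mono fun x => min_le_left _ _
  have main' : (∫⁻ x, f' x) ^ l * (∫⁻ x, g' x) ^ (1 - l) ≤ ∫⁻ x, h' x := by
    calc (∫⁻ x, f' x) ^ l * (∫⁻ x, g' x) ^ (1 - l)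
        ≤ (ENNReal.ofReal l * ∫⁻ x, f' x) + ENNReal.ofReal (1 - l) * ∫⁻ x, g' x :=
          amgm2 hl0 hl1 _ _
      _ = ∫⁻ t in Ioo (0:ℝ) 1, (ENNReal.ofReal l * volume {x | ENNReal.ofReal t < f' x}
            + ENNReal.ofReal (1 - l) * volume {x | ENNReal.ofReal t < g' x}) := by
          rw [lintegral_add_left (meas_vf.const_mul _),
            lintegral_const_mul' _ _ ENNReal.ofReal_ne_top,
            lintegral_const_mul' _ _ ENNReal.ofReal_ne_top, hlcf, hlcg]
      _ ≤ ∫⁻ t in Ioo (0:ℝ) 1, volume {x | ENNReal.ofReal t < h' x} := by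
          have meas_vh : Measurable fun t : ℝ => volume {x | ENNReal.ofReal t < h' x} := by
            have : Antitone fun t : ℝ => volume {x | ENNReal.ofReal t < h' x} := fun t s hts =>
              measure_mono fun x hx => lt_of_le_of_lt (ENNReal.ofReal_le_ofReal hts) hx
            exact this.measurable
          exact setLIntegral_mono meas_vh claim
      _ ≤ ∫⁻ x, h' x := step1
  rw [If', Ig', Ih'] at main'
  have hfinal := mul_le_mul_left main' D
  rw [ENNReal.div_mul_cancel hD0 hDtop] at hfinal
  calc (∫⁻ x, f x) ^ l * (∫⁻ x, g x) ^ (1 - l)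
      = ((∫⁻ x, f x) / Sf * Sf) ^ l * ((∫⁻ x, g x) / Sg * Sg) ^ (1 - l) := by
        rw [ENNReal.div_mul_cancel hSf0 hfS, ENNReal.div_mul_cancel hSg0 hgS]
    _ = (((∫⁻ x, f x) / Sf) ^ l * Sf ^ l) * (((∫⁻ x, g x) / Sg) ^ (1 - l) * Sg ^ (1 - l)) := by
        rw [ENNReal.mul_rpow_of_nonneg _ _ hl0.le, ENNReal.mul_rpow_of_nonneg _ _ h1l.le]
    _ = ((∫⁻ x, f x) / Sf) ^ l * ((∫⁻ x, g x) / Sg) ^ (1 - l) * D := by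
        rw [hDdef]; ring
    _ ≤ ∫⁻ x, h x := hfinal

lemma vol_set_measurable {k : ℕ} {φ : Fin k → ℝ → ℝ} (hφm : ∀ i, Measurable (φ i)) (t : ℝ) :
    MeasurableSet {w : Fin k → ℝ | ∑ i, φ i (w i) ≤ t} := by
  have : Measurable fun w : Fin k → ℝ => ∑ i, φ i (w i) :=
    Finset.measurable_sum _ fun i _ => (hφm i).comp (measurable_pi_apply i)
  exact measurableSet_le this measurable_const

lemma vol_mono {k : ℕ} (φ : Fin k → ℝ → ℝ) :
    Monotone fun t => volume {w : Fin k → ℝ | ∑ i, φ i (w i) ≤ t} :=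
  fun t s hts => measure_mono fun w hw => le_trans hw hts

lemma vol_finite {k : ℕ} {φ : Fin k → ℝ → ℝ} (h0 : ∀ i x, 0 ≤ φ i x)
    (hR : ∀ i t, ∃ R, ∀ x, φ i x ≤ t → |x| ≤ R) (t : ℝ) :
    volume {w : Fin k → ℝ | ∑ i, φ i (w i) ≤ t} ≠ ∞ := by
  choose R hRs using fun i => hR i t
  have hsub : {w : Fin k → ℝ | ∑ i, φ i (w i) ≤ t}
      ⊆ Set.pi univ fun i => Icc (-(R i)) (R i) := by
    intro w hw
    intro i _
    have hterm : φ i (w i) ≤ t := by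
      refine le_trans ?_ hw
      exact Finset.single_le_sum (fun j _ => h0 j (w j)) (Finset.mem_univ i)
    have := hRs i (w i) hterm
    exact abs_le.mp this
  refine ne_of_lt (lt_of_le_of_lt (measure_mono hsub) ?_)
  rw [volume_pi_pi]
  exact ENNReal.prod_lt_top fun i _ => by
    rw [Real.volume_Icc]; exact ENNReal.ofReal_ne_top.lt_top

lemma vol_univ_fin0 : volume (univ : Set (Fin 0 → ℝ)) = 1 := by
  have h : (univ : Set (Fin 0 → ℝ)) = Set.pi univ fun _ : Fin 0 => (univ : Set ℝ) := by
    simp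
  rw [h, volume_pi_pi]
  simp

lemma vol_fubini {k : ℕ} (φ : Fin (k + 1) → ℝ → ℝ) (hφm : ∀ i, Measurable (φ i)) (t : ℝ) :
    volume {w : Fin (k + 1) → ℝ | ∑ i, φ i (w i) ≤ t}
      = ∫⁻ x, volume {w : Fin k → ℝ | ∑ i, φ i.succ (w i) ≤ t - φ 0 x} := by
  have hMP := (volume_preserving_piFinSuccAbove (fun _ : Fin (k + 1) => ℝ) 0).symm
  set T : Set (ℝ × (Fin k → ℝ)) := {p | φ 0 p.1 + ∑ i, φ i.succ (p.2 i) ≤ t} with hTdef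
  have hTm : MeasurableSet T := by
    have h1 : Measurable fun p : ℝ × (Fin k → ℝ) => φ 0 p.1 + ∑ i, φ i.succ (p.2 i) := by
      refine ((hφm 0).comp measurable_fst).add ?_
      exact (Finset.measurable_sum _ fun i _ =>
        (hφm i.succ).comp ((measurable_pi_apply i).comp measurable_snd))
    exact measurableSet_le h1 measurable_const
  have hpre : (MeasurableEquiv.piFinSuccAbove (fun _ : Fin (k + 1) => ℝ) 0).symm ⁻¹' 
      {w : Fin (k + 1) → ℝ | ∑ i, φ i (w i) ≤ t} = T := by
    ext ⟨x, w⟩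
    simp only [mem_preimage, MeasurableEquiv.piFinSuccAbove_symm_apply, mem_setOf_eq, hTdef]
    have hc : (Fin.insertNthEquiv (fun _ : Fin (k + 1) => ℝ) 0) (x, w) = Fin.cons x w := by
      simp [Fin.insertNthEquiv, Fin.insertNth_zero']
    rw [hc, Fin.sum_univ_succ]
    simp [Fin.cons_succ]
  have heq := hMP.measure_preimage
    (s := {w : Fin (k + 1) → ℝ | ∑ i, φ i (w i) ≤ t})
    (vol_set_measurable hφm t).nullMeasurableSet
  rw [hpre] at heq
  rw [← heq]
  rw [Measure.volume_eq_prod, Measure.prod_apply hTm]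
  refine lintegral_congr fun x => ?_
  congr 1
  ext w
  simp only [hTdef, mem_preimage, mem_setOf_eq]
  constructor <;> intro <;> linarith

lemma vol_logConcave : ∀ (k : ℕ) (φ : Fin k → ℝ → ℝ),
    (∀ i, ConvexOn ℝ univ (φ i)) → (∀ i, Measurable (φ i)) → (∀ i x, 0 ≤ φ i x) →
    (∀ i t, ∃ R, ∀ x, φ i x ≤ t → |x| ≤ R) →
    ∀ (t0 t1 l : ℝ), 0 < l → l < 1 →
    volume {w : Fin k → ℝ | ∑ i, φ i (w i) ≤ t0} ^ l
      * volume {w : Fin k → ℝ | ∑ i, φ i (w i) ≤ t1} ^ (1 - l)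
    ≤ volume {w : Fin k → ℝ | ∑ i, φ i (w i) ≤ l * t0 + (1 - l) * t1} := by
  intro k
  induction k with
  | zero =>
    intro φ _ _ _ _ t0 t1 l hl0 hl1
    have hsum : ∀ (w : Fin 0 → ℝ) , ∑ i, φ i (w i) = 0 := by
      intro w; simp
    have hset : ∀ s : ℝ, {w : Fin 0 → ℝ | ∑ i, φ i (w i) ≤ s}
        = if 0 ≤ s then (univ : Set (Fin 0 → ℝ)) else ∅ := by
      intro s
      by_cases hs : 0 ≤ s
      · simp only [hs, if_true]
        exact eq_univ_of_forall fun w => by simp [hsum w, hs]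
      · simp only [hs, if_false]
        exact eq_empty_of_forall_notMem fun w hw => hs (le_trans (by simp [hsum w] at hw ⊢; linarith [hw]) le_rfl)
    rcases le_or_gt 0 t0 with ht0 | ht0
    · rcases le_or_gt 0 t1 with ht1 | ht1
      · have hc : 0 ≤ l * t0 + (1 - l) * t1 := by nlinarith
        rw [hset t0, hset t1, hset _, if_pos ht0, if_pos ht1, if_pos hc, vol_univ_fin0]
        simp
      · rw [hset t1, if_neg (not_le.mpr ht1)]
        rw [measure_empty, ENNReal.zero_rpow_of_pos (by linarith), mul_zero]
        exact zero_le
    · rw [hset t0, if_neg (not_le.mpr ht0)]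
      rw [measure_empty, ENNReal.zero_rpow_of_pos hl0, zero_mul]
      exact zero_le
  | succ k ih =>
    intro φ hc hm h0 hR t0 t1 l hl0 hl1
    have h1l : (0:ℝ) < 1 - l := by linarith
    set ψ : Fin k → ℝ → ℝ := fun i => φ i.succ with hψdef
    have hψc : ∀ i, ConvexOn ℝ univ (ψ i) := fun i => hc i.succ
    have hψm : ∀ i, Measurable (ψ i) := fun i => hm i.succ
    have hψ0 : ∀ i x, 0 ≤ ψ i x := fun i x => h0 i.succ x
    have hψR : ∀ i t, ∃ R, ∀ x, ψ i x ≤ t → |x| ≤ R := fun i t => hR i.succ t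
    set G : ℝ → ℝ≥0∞ := fun s => volume {w : Fin k → ℝ | ∑ i, ψ i (w i) ≤ s} with hGdef
    have hGmono : Monotone G := vol_mono ψ
    have hGfin : ∀ s, G s ≠ ∞ := fun s => vol_finite hψ0 hψR s
    have hGmeas : Measurable G := hGmono.measurable
    rw [vol_fubini φ hm t0, vol_fubini φ hm t1, vol_fubini φ hm (l * t0 + (1 - l) * t1)]
    have hf : Measurable fun x => G (t0 - φ 0 x) :=
      hGmeas.comp (measurable_const.sub (hm 0))
    have hg : Measurable fun x => G (t1 - φ 0 x) :=
      hGmeas.comp (measurable_const.sub (hm 0))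
    have hh : Measurable fun x => G ((l * t0 + (1 - l) * t1) - φ 0 x) :=
      hGmeas.comp (measurable_const.sub (hm 0))
    have hfS : (⨆ x, G (t0 - φ 0 x)) ≠ ∞ := by
      refine ne_of_lt (lt_of_le_of_lt (iSup_le fun x => ?_) (lt_top_iff_ne_top.mpr (hGfin t0)))
      exact hGmono (by linarith [h0 0 x])
    have hgS : (⨆ x, G (t1 - φ 0 x)) ≠ ∞ := by
      refine ne_of_lt (lt_of_le_of_lt (iSup_le fun x => ?_) (lt_top_iff_ne_top.mpr (hGfin t1)))
      exact hGmono (by linarith [h0 0 x])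
    have key : ∀ x y, G (t0 - φ 0 x) ^ l * G (t1 - φ 0 y) ^ (1 - l)
        ≤ G ((l * t0 + (1 - l) * t1) - φ 0 (l * x + (1 - l) * y)) := by
      intro x y
      have hconv : φ 0 (l * x + (1 - l) * y) ≤ l * φ 0 x + (1 - l) * φ 0 y := by
        have := (hc 0).2 (mem_univ x) (mem_univ y) hl0.le h1l.le (by ring)
        simpa [smul_eq_mul] using this
      calc G (t0 - φ 0 x) ^ l * G (t1 - φ 0 y) ^ (1 - l)
          ≤ G (l * (t0 - φ 0 x) + (1 - l) * (t1 - φ 0 y)) :=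
            ih ψ hψc hψm hψ0 hψR (t0 - φ 0 x) (t1 - φ 0 y) l hl0 hl1
        _ ≤ G ((l * t0 + (1 - l) * t1) - φ 0 (l * x + (1 - l) * y)) := by
            apply hGmono
            nlinarith
    exact prekopa_leindler_dim1 hf hg hh hl0 hl1 hfS hgS key

theorem orlicz_section_ineq (k : ℕ) (F : Fin (k + 2) → ℝ → ℝ)
    (hconv : ∀ i, ConvexOn ℝ (Set.Ici 0) (F i))
    (hmono : ∀ i, StrictMonoOn (F i) (Set.Ici 0))
    (h0 : ∀ i, F i 0 = 0)
    (m : ℝ → ℝ → ℝ)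
    (hm : ∀ y z, m y z =
      (volume {w : Fin k → ℝ |
        ∑ i, F i |(Fin.cons y (Fin.cons z w) : Fin (k + 2) → ℝ) i| ≤ 1}).toReal)
    (y y' z z' : ℝ) (hy' : 0 < y') (hy : y' < y) (hz' : 0 < z') (hz : z' < z) :
    m y z * m y' z' ≤ m y z' * m y' z := by
  classical
  set ψ : Fin k → ℝ → ℝ := fun i s => F i.succ.succ |s| with hψdef
  -- basic properties of each F j on [0, ∞)
  have hFmonoOn : ∀ j : Fin (k + 2), MonotoneOn (F j) (Set.Ici 0) :=
    fun j => (hmono j).monotoneOn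
  have hF0le : ∀ (j : Fin (k + 2)) (x : ℝ), 0 ≤ F j |x| := by
    intro j x
    have := hFmonoOn j (self_mem_Ici) (mem_Ici.mpr (abs_nonneg x)) (abs_nonneg x)
    rwa [h0 j] at this
  -- ψ properties
  have hψc : ∀ i, ConvexOn ℝ univ (ψ i) := by
    intro i
    refine ⟨convex_univ, ?_⟩
    intro x _ y _ a b ha hb hab
    simp only [smul_eq_mul, hψdef]
    have habs : |a * x + b * y| ≤ a * |x| + b * |y| := by
      calc |a * x + b * y| ≤ |a * x| + |b * y| := abs_add_le _ _
        _ = a * |x| + b * |y| := by rw [abs_mul, abs_mul, abs_of_nonneg ha, abs_of_nonneg hb]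
    have hcomb_mem : a * |x| + b * |y| ∈ Set.Ici (0:ℝ) := by
      have : 0 ≤ a * |x| + b * |y| := by positivity
      exact mem_Ici.mpr this
    calc F i.succ.succ |a * x + b * y|
        ≤ F i.succ.succ (a * |x| + b * |y|) :=
          hFmonoOn i.succ.succ (mem_Ici.mpr (abs_nonneg _)) hcomb_mem habs
      _ ≤ a * F i.succ.succ |x| + b * F i.succ.succ |y| := by
          have := (hconv i.succ.succ).2 (mem_Ici.mpr (abs_nonneg x))
            (mem_Ici.mpr (abs_nonneg y)) ha hb hab
          simpa [smul_eq_mul] using this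
  have hψm : ∀ i, Measurable (ψ i) := by
    intro i
    have hM : Monotone fun u : ℝ => F i.succ.succ (max u 0) := by
      intro u v huv
      exact hFmonoOn i.succ.succ (mem_Ici.mpr (le_max_right u 0))
        (mem_Ici.mpr (le_max_right v 0)) (max_le_max huv le_rfl)
    have : ψ i = (fun u : ℝ => F i.succ.succ (max u 0)) ∘ fun s : ℝ => |s| := by
      funext s
      simp [hψdef, max_eq_left (abs_nonneg s)]
    rw [this]
    exact hM.measurable.comp measurable_abs
  have hψ0 : ∀ i x, 0 ≤ ψ i x := fun i x => hF0le i.succ.succ x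
  have hψR : ∀ i t, ∃ R, ∀ x, ψ i x ≤ t → |x| ≤ R := by
    intro i t
    set j := i.succ.succ
    have hc1 : 0 < F j 1 := by
      have := hmono j (self_mem_Ici) (mem_Ici.mpr zero_le_one) zero_lt_one
      rwa [h0 j] at this
    refine ⟨max 1 (t / F j 1), fun x hx => ?_⟩
    by_cases h1 : |x| ≤ 1
    · exact le_trans h1 (le_max_left _ _)
    push_neg at h1
    have hxpos : (0:ℝ) < |x| := lt_trans zero_lt_one h1
    -- convexity: F j 1 ≤ F j |x| / |x|
    have hkey : F j 1 ≤ F j |x| / |x| := by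
      have ha : (0:ℝ) ≤ 1 / |x| := by positivity
      have hb : (0:ℝ) ≤ 1 - 1 / |x| := by
        rw [sub_nonneg, div_le_one hxpos]; exact h1.le
      have hab : 1 / |x| + (1 - 1 / |x|) = 1 := by ring
      have hcv := (hconv j).2 (mem_Ici.mpr (abs_nonneg x))
        (self_mem_Ici (a := (0:ℝ))) ha hb hab
      have harg : (1 / |x|) • |x| + (1 - 1 / |x|) • (0:ℝ) = 1 := by
        field_simp; simp [hxpos.ne']
      rw [harg] at hcv
      have hgoal : F j 1 ≤ (1 / |x|) * F j |x| + (1 - 1 / |x|) * F j 0 := by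
        simpa [smul_eq_mul] using hcv
      rw [h0 j, mul_zero, add_zero] at hgoal
      calc F j 1 ≤ (1 / |x|) * F j |x| := hgoal
        _ = F j |x| / |x| := by ring
    have hFx : F j 1 * |x| ≤ F j |x| := by
      have hmm := mul_le_mul_of_nonneg_right hkey (abs_nonneg x)
      rwa [div_mul_cancel₀ _ (ne_of_gt hxpos)] at hmm
    have hxFt : F j |x| ≤ t := hx
    have hxle : |x| ≤ t / F j 1 := by
      rw [le_div_iff₀ hc1, mul_comm]
      linarith
    exact le_trans hxle (le_max_right _ _)
  -- rewrite m in terms of the section volumes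
  set V : ℝ → ℝ≥0∞ := fun s => volume {w : Fin k → ℝ | ∑ i, ψ i (w i) ≤ s} with hVdef
  have hmrw : ∀ u v : ℝ, 0 ≤ u → 0 ≤ v → m u v = (V (1 - F 0 u - F 1 v)).toReal := by
    intro u v hu hv
    rw [hm u v]
    congr 1
    congr 1
    ext w
    simp only [mem_setOf_eq]
    rw [Fin.sum_univ_succ, Fin.sum_univ_succ]
    simp only [Fin.cons_zero, Fin.cons_succ]
    rw [abs_of_nonneg hu, abs_of_nonneg hv, Fin.succ_zero_eq_one]
    constructor <;> intro hle <;> simp only [hψdef] at * <;> linarith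
  set a := F 0 y with hadef
  set a' := F 0 y' with ha'def
  set b := F 1 z with hbdef
  set b' := F 1 z' with hb'def
  have haa : a' < a := hmono 0 (mem_Ici.mpr hy'.le) (mem_Ici.mpr (lt_trans hy' hy).le) hy
  have hbb : b' < b := hmono 1 (mem_Ici.mpr hz'.le) (mem_Ici.mpr (lt_trans hz' hz).le) hz
  have hmyz : m y z = (V (1 - a - b)).toReal := hmrw y z (lt_trans hy' hy).le (lt_trans hz' hz).le
  have hmyz' : m y z' = (V (1 - a - b')).toReal := hmrw y z' (lt_trans hy' hy).le hz'.le
  have hmy'z : m y' z = (V (1 - a' - b)).toReal := hmrw y' z hy'.le (lt_trans hz' hz).le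
  have hmy'z' : m y' z' = (V (1 - a' - b')).toReal := hmrw y' z' hy'.le hz'.le
  set Δ : ℝ := (a - a') + (b - b') with hΔdef
  have hΔpos : 0 < Δ := by simp only [hΔdef]; linarith
  set l : ℝ := (a - a') / Δ with hldef
  have hl0 : 0 < l := by apply div_pos <;> linarith
  have hl1 : l < 1 := by
    rw [hldef, div_lt_one hΔpos]
    linarith
  have h1l0 : 0 < 1 - l := by linarith
  have h1l1 : 1 - l < 1 := by linarith
  have t1eq : l * (1 - a - b) + (1 - l) * (1 - a' - b') = 1 - a - b' := by
    rw [hldef]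
    field_simp
    ring
  have t2eq : (1 - l) * (1 - a - b) + (1 - (1 - l)) * (1 - a' - b') = 1 - a' - b := by
    rw [hldef]
    field_simp
    ring
  have P1 : V (1 - a - b) ^ l * V (1 - a' - b') ^ (1 - l) ≤ V (1 - a - b') := by
    have := vol_logConcave k ψ hψc hψm hψ0 hψR (1 - a - b) (1 - a' - b') l hl0 hl1
    rwa [t1eq] at this
  have P2 : V (1 - a - b) ^ (1 - l) * V (1 - a' - b') ^ (1 - (1 - l)) ≤ V (1 - a' - b) := by
    have := vol_logConcave k ψ hψc hψm hψ0 hψR (1 - a - b) (1 - a' - b') (1 - l) h1l0 h1l1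
    rwa [t2eq] at this
  by_cases hV0 : V (1 - a - b) = 0
  · rw [hmyz, hV0]
    simp only [ENNReal.toReal_zero, zero_mul]
    rw [hmyz', hmy'z]
    exact mul_nonneg ENNReal.toReal_nonneg ENNReal.toReal_nonneg
  have hVmono := vol_mono ψ
  have hVfin : ∀ s, V s ≠ ∞ := fun s => vol_finite hψ0 hψR s
  have hV20 : V (1 - a' - b') ≠ 0 := by
    intro hVeq
    apply hV0
    refine le_antisymm ?_ zero_le
    rw [← hVeq]
    exact hVmono (by linarith)
  have keyineq : V (1 - a - b) * V (1 - a' - b') ≤ V (1 - a - b') * V (1 - a' - b) := by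
    calc V (1 - a - b) * V (1 - a' - b')
        = (V (1 - a - b) ^ l * V (1 - a - b) ^ (1 - l))
          * (V (1 - a' - b') ^ (1 - l) * V (1 - a' - b') ^ (1 - (1 - l))) := by
          rw [← ENNReal.rpow_add _ _ hV0 (hVfin _), ← ENNReal.rpow_add _ _ hV20 (hVfin _)]
          norm_num
      _ = (V (1 - a - b) ^ l * V (1 - a' - b') ^ (1 - l))
          * (V (1 - a - b) ^ (1 - l) * V (1 - a' - b') ^ (1 - (1 - l))) := by ring
      _ ≤ V (1 - a - b') * V (1 - a' - b) := mul_le_mul' P1 P2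
  rw [hmyz, hmyz', hmy'z, hmy'z']
  rw [← ENNReal.toReal_mul, ← ENNReal.toReal_mul]
  refine ENNReal.toReal_mono ?_ keyineq
  exact ENNReal.mul_ne_top (hVfin _) (hVfin _)
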